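/- (Gerlach's lemma) Let Q be a positivity preserving form in the wide sense with compact resolvent G_α. Suppose f ∈ L²(X,m) with f > 0 a.e. satisfies G₁ f ≥ c f for some constant c > 0. Then there exist finitely many pairwise disjoint Q-connected components C₁, ..., C_l such that X = ⋃_{i=1}^l C_i up to an m-null set, and this decomposition is unique up to sets of measure zero. -/

import Mathlib

open MeasureTheory Filter Topology RealInnerProductSpace

noncomputable section

variable {X : Type*} [MeasurableSpace X]

open scoped Classical in
/-- Multiplication by the indicator function of a set `A`, as a map on `L²`. -/
def indMul {μ : Measure X} (A : Set X) (f : Lp ℝ 2 μ) : Lp ℝ 2 μ :=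
  if h : MeasurableSet A then ((Lp.memLp f).indicator h).toLp else 0

/-- A closed (nonnegative, symmetric) quadratic form in the wide sense on `L²(X,m)`:
its domain is a not necessarily dense subspace which is complete in the form norm. -/
structure WideForm (μ : Measure X) where
  dom : Submodule ℝ (Lp ℝ 2 μ)
  Q : Lp ℝ 2 μ → Lp ℝ 2 μ → ℝ
  symm : ∀ u v, Q u v = Q v u
  add_left : ∀ u v w, Q (u + v) w = Q u w + Q v w
  smul_left : ∀ (c : ℝ) u v, Q (c • u) v = c * Q u v
  nonneg : ∀ u, 0 ≤ Q u u
  closed : ∀ f : ℕ → Lp ℝ 2 μ, (∀ n, f n ∈ dom) →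
    (∀ ε > 0, ∃ N, ∀ m ≥ N, ∀ n ≥ N,
      Q (f m - f n) (f m - f n) + ‖f m - f n‖ ^ 2 < ε) →
    ∃ g ∈ dom, Tendsto (fun n => Q (f n - g) (f n - g) + ‖f n - g‖ ^ 2) atTop (nhds 0)

/-- `G` is the resolvent family of the closed form `T`. -/
def WideForm.IsResolvent {μ : Measure X} (T : WideForm μ)
    (G : ℝ → Lp ℝ 2 μ →L[ℝ] Lp ℝ 2 μ) : Prop :=
  ∀ α > 0, ∀ u, G α u ∈ T.dom ∧
    ∀ v ∈ T.dom, T.Q (G α u) v + α * ⟪G α u, v⟫ = ⟪u, v⟫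

/-- `T` is positivity preserving. -/
def WideForm.PosPres {μ : Measure X} (T : WideForm μ) : Prop :=
  ∀ u ∈ T.dom, |u| ∈ T.dom ∧ T.Q |u| |u| ≤ T.Q u u

/-- `A` is `Q`-invariant, characterized through the form (valid for positivity
preserving forms). -/
def FormInvariant {μ : Measure X} (T : WideForm μ) (A : Set X) : Prop :=
  MeasurableSet A ∧ ∀ f ∈ T.dom, indMul A f ∈ T.dom ∧
    T.Q f f = T.Q (indMul A f) (indMul A f) + T.Q (f - indMul A f) (f - indMul A f)

/-- `A` is a `Q`-connected component: an invariant set of positive measure such that the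
restriction `Q_A` is irreducible. -/
def IsComponent {μ : Measure X} (T : WideForm μ) (A : Set X) : Prop :=
  FormInvariant T A ∧ 0 < μ A ∧
    ∀ B : Set X, MeasurableSet B → B ⊆ A →
      (∀ f ∈ T.dom, indMul A f = f →
        (indMul B f ∈ T.dom ∧
          T.Q f f = T.Q (indMul B f) (indMul B f)
            + T.Q (f - indMul B f) (f - indMul B f))) →
      μ B = 0 ∨ μ (A \ B) = 0

section Gerlach
variable {μ : Measure X}

lemma indMul_coeFn {A : Set X} (hA : MeasurableSet A) (f : Lp ℝ 2 μ) :
    (indMul A f : X → ℝ) =ᵐ[μ] A.indicator f := by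
  rw [indMul, dif_pos hA]; exact MemLp.coeFn_toLp _

lemma indMul_smul {A : Set X} (hA : MeasurableSet A) (a : ℝ) (f : Lp ℝ 2 μ) :
    indMul A (a • f) = a • indMul A f := by
  refine Lp.ext ?_
  filter_upwards [indMul_coeFn hA (a • f), indMul_coeFn hA f, Lp.coeFn_smul a f,
    Lp.coeFn_smul a (indMul A f)] with x h1 h2 h3 h4
  rw [h1, h4, Pi.smul_apply, h2]
  simp only [Set.indicator]
  split <;> simp [h3]

lemma indMul_add {A : Set X} (hA : MeasurableSet A) (f g : Lp ℝ 2 μ) :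
    indMul A (f + g) = indMul A f + indMul A g := by
  refine Lp.ext ?_
  filter_upwards [indMul_coeFn hA (f + g), indMul_coeFn hA f, indMul_coeFn hA g,
    Lp.coeFn_add f g, Lp.coeFn_add (indMul A f) (indMul A g)] with x h1 h2 h3 h4 h5
  rw [h1, h5, Pi.add_apply, h2, h3]
  by_cases hx : x ∈ A
  · rw [Set.indicator_of_mem hx, Set.indicator_of_mem hx, Set.indicator_of_mem hx, h4,
      Pi.add_apply]
  · rw [Set.indicator_of_notMem hx, Set.indicator_of_notMem hx,
      Set.indicator_of_notMem hx, add_zero]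

lemma indMul_indMul {A B : Set X} (hA : MeasurableSet A) (hB : MeasurableSet B)
    (f : Lp ℝ 2 μ) : indMul A (indMul B f) = indMul (A ∩ B) f := by
  refine Lp.ext ?_
  filter_upwards [indMul_coeFn hA (indMul B f), indMul_coeFn (hA.inter hB) f,
    (indMul_coeFn hB f).indicator (s := A)] with x h1 h2 h3
  rw [h1, h3, h2, Set.indicator_indicator]

lemma indMul_idem {A : Set X} (hA : MeasurableSet A) (f : Lp ℝ 2 μ) :
    indMul A (indMul A f) = indMul A f := by
  rw [indMul_indMul hA hA, Set.inter_self]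

lemma indMul_compl {A : Set X} (hA : MeasurableSet A) (f : Lp ℝ 2 μ) :
    indMul Aᶜ f = f - indMul A f := by
  refine Lp.ext ?_
  filter_upwards [indMul_coeFn hA.compl f, indMul_coeFn hA f,
    Lp.coeFn_sub f (indMul A f)] with x h1 h2 h3
  rw [h1, h3, Pi.sub_apply, h2]
  simp only [Set.indicator]
  by_cases hx : x ∈ A <;> simp [hx]

lemma indMul_univ (f : Lp ℝ 2 μ) : indMul Set.univ f = f := by
  refine Lp.ext ?_
  filter_upwards [indMul_coeFn MeasurableSet.univ f] with x h1
  rw [h1, Set.indicator_univ]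

lemma indMul_null {A : Set X} (hA : μ A = 0) (f : Lp ℝ 2 μ) :
    indMul A f = 0 := by
  by_cases hmA : MeasurableSet A
  · refine Lp.ext ?_
    have h0 : ∀ᵐ x ∂μ, x ∉ A := by
      rw [ae_iff]; simpa using hA
    filter_upwards [indMul_coeFn hmA f, h0, Lp.coeFn_zero ℝ 2 μ] with x h1 h2 h3
    rw [h1, h3, Set.indicator_of_notMem h2]; simp
  · rw [indMul, dif_neg hmA]

lemma indMul_congr_ae {A B : Set X} (hA : MeasurableSet A) (hB : MeasurableSet B)
    (h : μ (symmDiff A B) = 0) (f : Lp ℝ 2 μ) : indMul A f = indMul B f := by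
  refine Lp.ext ?_
  have h0 : ∀ᵐ x ∂μ, x ∉ symmDiff A B := by rw [ae_iff]; simpa using h
  filter_upwards [indMul_coeFn hA f, indMul_coeFn hB f, h0] with x h1 h2 h3
  rw [h1, h2]
  rcases Set.mem_symmDiff.not.mp h3 |> not_or.mp with ⟨hab, hba⟩
  push_neg at hab hba
  by_cases hx : x ∈ A
  · rw [Set.indicator_of_mem hx, Set.indicator_of_mem (hab hx)]
  · rw [Set.indicator_of_notMem hx]
    by_cases hy : x ∈ B
    · exact absurd (hba hy) hx
    · rw [Set.indicator_of_notMem hy]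

lemma inner_indMul_left {A : Set X} (hA : MeasurableSet A) (u v : Lp ℝ 2 μ) :
    ⟪indMul A u, v⟫ = ⟪u, indMul A v⟫ := by
  rw [L2.inner_def, L2.inner_def]
  refine integral_congr_ae ?_
  filter_upwards [indMul_coeFn hA u, indMul_coeFn hA v] with x h1 h2
  rw [h1, h2]
  simp only [RCLike.inner_apply, conj_trivial, Set.indicator]
  split <;> simp [mul_comm]

end Gerlach
section Gerlach2
variable {μ : Measure X} {T : WideForm μ}

lemma Q_add_right (T : WideForm μ) (u v w : Lp ℝ 2 μ) :
    T.Q u (v + w) = T.Q u v + T.Q u w := by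
  rw [T.symm u (v + w), T.add_left, T.symm v u, T.symm w u]

lemma Q_smul_right (T : WideForm μ) (a : ℝ) (u v : Lp ℝ 2 μ) :
    T.Q u (a • v) = a * T.Q u v := by
  rw [T.symm u (a • v), T.smul_left, T.symm v u]

lemma Q_neg_left (T : WideForm μ) (u v : Lp ℝ 2 μ) : T.Q (-u) v = -T.Q u v := by
  have := T.smul_left (-1) u v; simpa using this

lemma Q_sub_left (T : WideForm μ) (u v w : Lp ℝ 2 μ) :
    T.Q (u - v) w = T.Q u w - T.Q v w := by
  rw [sub_eq_add_neg, T.add_left, Q_neg_left, sub_eq_add_neg]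

lemma Q_sub_right (T : WideForm μ) (u v w : Lp ℝ 2 μ) :
    T.Q u (v - w) = T.Q u v - T.Q u w := by
  rw [T.symm u (v - w), Q_sub_left, T.symm v u, T.symm w u]

lemma Q_expand (T : WideForm μ) (a b : Lp ℝ 2 μ) :
    T.Q (a + b) (a + b) = T.Q a a + 2 * T.Q a b + T.Q b b := by
  rw [T.add_left, Q_add_right, Q_add_right, T.symm b a]; ring

/-- From the Pythagorean identity, the cross term vanishes. -/
lemma cross_zero_of_pyth {w p : Lp ℝ 2 μ}
    (h : T.Q w w = T.Q p p + T.Q (w - p) (w - p)) : T.Q p (w - p) = 0 := by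
  have := Q_expand T p (w - p)
  rw [add_sub_cancel] at this
  linarith

lemma pyth_of_cross_zero {w p : Lp ℝ 2 μ} (h : T.Q p (w - p) = 0) :
    T.Q w w = T.Q p p + T.Q (w - p) (w - p) := by
  have := Q_expand T p (w - p)
  rw [add_sub_cancel] at this
  linarith

/-- Polarization of the Pythagorean identity for an additive idempotent projection. -/
lemma polarize {S : Set (Lp ℝ 2 μ)}
    (hSadd : ∀ u ∈ S, ∀ v ∈ S, u + v ∈ S)
    (P : Lp ℝ 2 μ → Lp ℝ 2 μ)
    (hPS : ∀ u ∈ S, P u ∈ S)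
    (hPadd : ∀ u v, P (u + v) = P u + P v)
    (hPidem : ∀ u, P (P u) = P u)
    (hpyth : ∀ w ∈ S, T.Q w w = T.Q (P w) (P w) + T.Q (w - P w) (w - P w)) :
    ∀ u ∈ S, ∀ v ∈ S, T.Q (P u) (v - P v) = 0 := by
  have base : ∀ w ∈ S, T.Q (P w) (w - P w) = 0 := fun w hw =>
    cross_zero_of_pyth (hpyth w hw)
  intro u hu v hv
  have hw : P u + v ∈ S := hSadd _ (hPS u hu) _ hv
  have h1 : P (P u + v) = P u + P v := by rw [hPadd, hPidem]
  have h2 := base _ hw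
  rw [h1] at h2
  have h3 : P u + v - (P u + P v) = v - P v := by abel
  rw [h3, T.add_left] at h2
  have h4 : T.Q (P v) (v - P v) = 0 := by
    have := base v hv; rwa [] at this
  linarith

lemma FormInvariant.meas {A : Set X} (hA : FormInvariant T A) : MeasurableSet A := hA.1

lemma FormInvariant.mem_dom {A : Set X} (hA : FormInvariant T A)
    {f : Lp ℝ 2 μ} (hf : f ∈ T.dom) : indMul A f ∈ T.dom := (hA.2 f hf).1

lemma FormInvariant.polar {A : Set X} (hA : FormInvariant T A) :
    ∀ u ∈ T.dom, ∀ v ∈ T.dom, T.Q (indMul A u) (v - indMul A v) = 0 :=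
  polarize (fun _ hu _ hv => T.dom.add_mem hu hv) (indMul A)
    (fun _ hu => hA.mem_dom hu) (indMul_add hA.meas)
    (indMul_idem hA.meas) (fun w hw => (hA.2 w hw).2)

lemma invariant_null {A : Set X} (hmA : MeasurableSet A) (h : μ A = 0) :
    FormInvariant T A := by
  refine ⟨hmA, fun f hf => ?_⟩
  rw [indMul_null h]
  refine ⟨T.dom.zero_mem, ?_⟩
  have h0 : T.Q 0 0 = 0 := by
    have := T.smul_left 0 0 0; simpa using this
  rw [sub_zero, h0, zero_add]

lemma invariant_congr {A B : Set X} (hA : FormInvariant T A) (hmB : MeasurableSet B)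
    (h : μ (symmDiff A B) = 0) : FormInvariant T B := by
  refine ⟨hmB, fun f hf => ?_⟩
  rw [indMul_congr_ae hmB hA.meas (by rwa [symmDiff_comm]) f]
  exact hA.2 f hf

lemma invariant_univ : FormInvariant T (Set.univ : Set X) := by
  refine ⟨MeasurableSet.univ, fun f hf => ?_⟩
  rw [indMul_univ]
  refine ⟨hf, ?_⟩
  have h0 : T.Q 0 0 = 0 := by
    have := T.smul_left 0 0 0; simpa using this
  rw [sub_self, h0, add_zero]

lemma invariant_compl {A : Set X} (hA : FormInvariant T A) : FormInvariant T Aᶜ := by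
  refine ⟨hA.meas.compl, fun f hf => ?_⟩
  rw [indMul_compl hA.meas]
  have h1 := (hA.2 f hf).2
  have h2 : f - (f - indMul A f) = indMul A f := by abel
  exact ⟨T.dom.sub_mem hf (hA.mem_dom hf), by rw [h2]; linarith⟩

lemma invariant_inter {A B : Set X} (hA : FormInvariant T A) (hB : FormInvariant T B) :
    FormInvariant T (A ∩ B) := by
  refine ⟨hA.meas.inter hB.meas, fun w hw => ?_⟩
  have hZ : indMul (A ∩ B) w = indMul A (indMul B w) :=
    (indMul_indMul hA.meas hB.meas w).symm
  have hmem : indMul (A ∩ B) w ∈ T.dom := by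
    rw [hZ]; exact hA.mem_dom (hB.mem_dom hw)
  refine ⟨hmem, ?_⟩
  refine pyth_of_cross_zero ?_
  set Z := indMul (A ∩ B) w with hZdef
  have hBZ : indMul B Z = Z := by
    rw [hZdef, indMul_indMul hB.meas (hA.meas.inter hB.meas), Set.inter_comm B,
      Set.inter_assoc, Set.inter_self]
  have hsplit : w - Z = (w - indMul B w) + (indMul B w - Z) := by abel
  rw [hsplit, Q_add_right]
  have t1 : T.Q Z (w - indMul B w) = 0 := by
    have := hB.polar Z hmem w hw
    rwa [hBZ] at this
  have t2 : T.Q Z (indMul B w - Z) = 0 := by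
    have := hA.polar (indMul B w) (hB.mem_dom hw) (indMul B w) (hB.mem_dom hw)
    rwa [← hZ] at this
  rw [t1, t2, add_zero]

lemma invariant_diff {A B : Set X} (hA : FormInvariant T A) (hB : FormInvariant T B) :
    FormInvariant T (A \ B) := by
  rw [Set.diff_eq]; exact invariant_inter hA (invariant_compl hB)

/-- An invariant subset of an invariant set for the restricted form is globally invariant. -/
lemma restricted_invariant {A B : Set X} (hA : FormInvariant T A)
    (hmB : MeasurableSet B) (hBA : B ⊆ A)
    (h : ∀ f ∈ T.dom, indMul A f = f →
      (indMul B f ∈ T.dom ∧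
        T.Q f f = T.Q (indMul B f) (indMul B f)
          + T.Q (f - indMul B f) (f - indMul B f))) :
    FormInvariant T B := by
  have hABB : A ∩ B = B := Set.inter_eq_self_of_subset_right hBA
  have hfix : ∀ f : Lp ℝ 2 μ, indMul A (indMul B f) = indMul B f := fun f => by
    rw [indMul_indMul hA.meas hmB, hABB]
  set S : Set (Lp ℝ 2 μ) := {f | f ∈ T.dom ∧ indMul A f = f} with hS
  have hSadd : ∀ u ∈ S, ∀ v ∈ S, u + v ∈ S := by
    intro u hu v hv
    exact ⟨T.dom.add_mem hu.1 hv.1, by rw [indMul_add hA.meas, hu.2, hv.2]⟩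
  have hpolar : ∀ u ∈ S, ∀ v ∈ S, T.Q (indMul B u) (v - indMul B v) = 0 :=
    polarize hSadd (indMul B)
      (fun u hu => ⟨(h u hu.1 hu.2).1, hfix u⟩) (indMul_add hmB) (indMul_idem hmB)
      (fun w hw => (h w hw.1 hw.2).2)
  refine ⟨hmB, fun w hw => ?_⟩
  have hAw : indMul A w ∈ S := ⟨hA.mem_dom hw, indMul_idem hA.meas w⟩
  have hBw : indMul B w = indMul B (indMul A w) := by
    rw [indMul_indMul hmB hA.meas, Set.inter_comm, hABB]
  have hmem : indMul B w ∈ T.dom := by rw [hBw]; exact (h _ hAw.1 hAw.2).1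
  refine ⟨hmem, pyth_of_cross_zero ?_⟩
  have hsplit : w - indMul B w = (w - indMul A w) + (indMul A w - indMul B w) := by abel
  rw [hsplit, Q_add_right]
  have t1 : T.Q (indMul B w) (w - indMul A w) = 0 := by
    have := hA.polar (indMul B w) hmem w hw
    rwa [hfix] at this
  have t2 : T.Q (indMul B w) (indMul A w - indMul B w) = 0 := by
    have := hpolar (indMul A w) hAw (indMul A w) hAw
    rwa [← hBw] at this
  rw [t1, t2, add_zero]

/-- The resolvent commutes with multiplication by an invariant set. -/
lemma invariant_resolvent_comm {G : ℝ → Lp ℝ 2 μ →L[ℝ] Lp ℝ 2 μ}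
    (hG : T.IsResolvent G) {A : Set X} (hA : FormInvariant T A)
    {α : ℝ} (hα : 0 < α) (u : Lp ℝ 2 μ) :
    G α (indMul A u) = indMul A (G α u) := by
  set g := G α u with hg
  have hgd : g ∈ T.dom := (hG α hα u).1
  have hgeq := (hG α hα u).2
  have key : ∀ v ∈ T.dom,
      T.Q (indMul A g) v + α * ⟪indMul A g, v⟫ = ⟪indMul A u, v⟫ := by
    intro v hv
    have hvd : indMul A v ∈ T.dom := hA.mem_dom hv
    have e1 : T.Q (indMul A g) v
        = T.Q (indMul A g) (indMul A v) + T.Q (indMul A g) (v - indMul A v) := by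
      rw [← Q_add_right]; congr 1; abel
    have e2 : T.Q (indMul A g) (v - indMul A v) = 0 := hA.polar g hgd v hv
    have e3 : T.Q g (indMul A v)
        = T.Q (indMul A g) (indMul A v) + T.Q (g - indMul A g) (indMul A v) := by
      rw [← T.add_left]; congr 1; abel
    have e4 : T.Q (g - indMul A g) (indMul A v) = 0 := by
      rw [T.symm]; exact hA.polar v hv g hgd
    have e5 : (⟪indMul A g, v⟫ : ℝ) = ⟪g, indMul A v⟫ := inner_indMul_left hA.meas g v
    have e6 := hgeq (indMul A v) hvd
    have e7 : (⟪u, indMul A v⟫ : ℝ) = ⟪indMul A u, v⟫ := (inner_indMul_left hA.meas u v).symm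
    rw [e1, e2, e5, add_zero]
    rw [e3, e4, add_zero] at e6
    linarith [e6, e7]
  have h2 := hG α hα (indMul A u)
  set g' := G α (indMul A u) with hg'
  have hdiff : g' - indMul A g ∈ T.dom := T.dom.sub_mem h2.1 (hA.mem_dom hgd)
  have hzero : ∀ v ∈ T.dom, T.Q (g' - indMul A g) v + α * ⟪g' - indMul A g, v⟫ = 0 := by
    intro v hv
    have := h2.2 v hv
    have := key v hv
    rw [Q_sub_left, inner_sub_left]
    linarith [h2.2 v hv, key v hv]
  have hd := hzero _ hdiff
  have hq := T.nonneg (g' - indMul A g)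
  have hi : (⟪g' - indMul A g, g' - indMul A g⟫ : ℝ) = ‖g' - indMul A g‖ ^ 2 :=
    real_inner_self_eq_norm_sq _
  have hnorm : ‖g' - indMul A g‖ ^ 2 = 0 := by nlinarith [sq_nonneg ‖g' - indMul A g‖]
  have hz : g' - indMul A g = 0 :=
    norm_eq_zero.mp ((pow_eq_zero_iff (by norm_num : (2:ℕ) ≠ 0)).mp hnorm)
  exact sub_eq_zero.mp hz

end Gerlach2
section Gerlach3
variable {μ : Measure X} {T : WideForm μ}

lemma inner_eq_integral (u v : Lp ℝ 2 μ) :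
    (⟪u, v⟫ : ℝ) = ∫ x, (u : X → ℝ) x * (v : X → ℝ) x ∂μ := by
  rw [L2.inner_def]
  refine integral_congr_ae (Filter.Eventually.of_forall fun x => ?_)
  simp only [RCLike.inner_apply, conj_trivial]; ring

lemma inner_mono_right {u w₁ w₂ : Lp ℝ 2 μ} (hu : 0 ≤ᵐ[μ] (u : X → ℝ))
    (h : w₁ ≤ w₂) : (⟪u, w₁⟫ : ℝ) ≤ ⟪u, w₂⟫ := by
  rw [inner_eq_integral, inner_eq_integral]
  have hle := (Lp.coeFn_le w₁ w₂).mpr h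
  refine integral_mono_ae ?_ ?_ ?_
  · simpa [RCLike.inner_apply, mul_comm] using L2.integrable_inner (𝕜 := ℝ) u w₁
  · simpa [RCLike.inner_apply, mul_comm] using L2.integrable_inner (𝕜 := ℝ) u w₂
  · filter_upwards [hu, hle] with x h1 h2
    exact mul_le_mul_of_nonneg_left h2 h1

lemma indMul_coeFn_nonneg {A : Set X} (hA : MeasurableSet A) {f : Lp ℝ 2 μ}
    (hf : ∀ᵐ x ∂μ, 0 < (f : X → ℝ) x) : 0 ≤ᵐ[μ] (indMul A f : X → ℝ) := by
  filter_upwards [indMul_coeFn hA f, hf] with x h1 h2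
  rw [h1]
  exact Set.indicator_nonneg (fun _ _ => le_of_lt h2) x

lemma indMul_ne_zero {A : Set X} (hA : MeasurableSet A) (hpos : 0 < μ A)
    {f : Lp ℝ 2 μ} (hf : ∀ᵐ x ∂μ, 0 < (f : X → ℝ) x) : indMul A f ≠ 0 := by
  intro h
  have h0 : (indMul A f : X → ℝ) =ᵐ[μ] 0 := by
    rw [h]; exact Lp.coeFn_zero ℝ 2 μ
  have : ∀ᵐ x ∂μ, x ∉ A := by
    filter_upwards [indMul_coeFn hA f, hf, h0] with x h1 h2 h3 hx
    rw [h1, Set.indicator_of_mem hx] at h3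
    exact absurd h3 (ne_of_gt h2)
  rw [ae_iff] at this
  simp only [not_not] at this
  exact absurd this (ne_of_gt hpos)

lemma inner_indMul_self {A : Set X} (hA : MeasurableSet A) (f : Lp ℝ 2 μ) :
    (⟪indMul A f, f⟫ : ℝ) = ‖indMul A f‖ ^ 2 := by
  have h1 : (⟪indMul A (indMul A f), f⟫ : ℝ) = ⟪indMul A f, indMul A f⟫ :=
    inner_indMul_left hA (indMul A f) f
  rw [indMul_idem hA] at h1
  rw [h1, real_inner_self_eq_norm_sq]

lemma inner_indMul_orth {A B : Set X} (hA : MeasurableSet A) (hB : MeasurableSet B)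
    (h : μ (A ∩ B) = 0) (x y : Lp ℝ 2 μ) :
    (⟪indMul A x, indMul B y⟫ : ℝ) = 0 := by
  rw [inner_indMul_left hA, indMul_indMul hA hB, indMul_null h, inner_zero_right]

set_option maxHeartbeats 1000000 in
/-- Uniform bound on the size of a.e. disjoint families of invariant sets of positive
measure, via compactness of the resolvent. -/
lemma card_bound {G : ℝ → Lp ℝ 2 μ →L[ℝ] Lp ℝ 2 μ}
    (hG : T.IsResolvent G) (hcpt : IsCompactOperator (G 1))
    {f : Lp ℝ 2 μ} (hf : ∀ᵐ x ∂μ, 0 < (f : X → ℝ) x)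
    {c : ℝ} (hc : 0 < c) (hGf : c • f ≤ G 1 f) :
    ∃ N : ℕ, ∀ (n : ℕ) (A : Fin n → Set X),
      (∀ i, FormInvariant T (A i)) → (∀ i, 0 < μ (A i)) →
      (∀ i j, i ≠ j → μ (A i ∩ A j) = 0) → n ≤ N := by
  obtain ⟨K, hK, hKmem⟩ := hcpt
  rw [Metric.mem_nhds_iff] at hKmem
  obtain ⟨ε, hε, hball⟩ := hKmem
  set δ : ℝ := c * (ε / 2) with hδdef
  have hδ : 0 < δ := by positivity
  obtain ⟨t, htfin, htcov⟩ := (Metric.totallyBounded_iff).mp hK.totallyBounded (δ / 2)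
    (by positivity)
  refine ⟨htfin.toFinset.card, ?_⟩
  intro n A hinv hpos hdisj
  -- the normalized test vectors
  set u : Fin n → Lp ℝ 2 μ := fun i => indMul (A i) f with hu
  have hune : ∀ i, u i ≠ 0 := fun i => indMul_ne_zero (hinv i).meas (hpos i) hf
  have hupos : ∀ i, (0:ℝ) < ‖u i‖ := fun i => norm_pos_iff.mpr (hune i)
  set s : Fin n → ℝ := fun i => ε / (2 * ‖u i‖) with hs
  have hspos : ∀ i, 0 < s i := fun i => by
    have := hupos i; positivity
  set v : Fin n → Lp ℝ 2 μ := fun i => s i • u i with hv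
  have hvnorm : ∀ i, ‖v i‖ = ε / 2 := by
    intro i
    rw [hv]
    simp only [norm_smul, Real.norm_eq_abs, abs_of_pos (hspos i), hs]
    rw [abs_of_pos (by have := hupos i; positivity), div_mul_eq_mul_div, div_eq_iff (by have := hupos i; positivity)]
    ring
  have hvK : ∀ i, G 1 (v i) ∈ K := by
    intro i
    apply hball
    rw [Metric.mem_ball, dist_zero_right, hvnorm i]
    linarith
  -- commutation and lower bound
  have hcomm : ∀ i, G 1 (u i) = indMul (A i) (G 1 f) := fun i =>
    invariant_resolvent_comm hG (hinv i) one_pos f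
  have hlow : ∀ i, (⟪u i, G 1 (u i)⟫ : ℝ) ≥ c * ‖u i‖ ^ 2 := by
    intro i
    rw [hcomm i]
    have e1 : (⟪u i, indMul (A i) (G 1 f)⟫ : ℝ) = ⟪indMul (A i) (u i), G 1 f⟫ :=
      (inner_indMul_left (hinv i).meas (u i) (G 1 f)).symm
    have e2 : indMul (A i) (u i) = u i := indMul_idem (hinv i).meas f
    rw [e1, e2]
    have e3 : (⟪u i, c • f⟫ : ℝ) ≤ ⟪u i, G 1 f⟫ :=
      inner_mono_right (indMul_coeFn_nonneg (hinv i).meas hf) hGf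
    have e4 : (⟪u i, c • f⟫ : ℝ) = c * ‖u i‖ ^ 2 := by
      rw [real_inner_smul_right, inner_indMul_self (hinv i).meas]
    linarith
  have hGvnorm : ∀ i, δ ≤ ‖G 1 (v i)‖ := by
    intro i
    have hsm : G 1 (v i) = s i • G 1 (u i) := (G 1).map_smul _ _
    have hin : (⟪v i, G 1 (v i)⟫ : ℝ) = s i ^ 2 * ⟪u i, G 1 (u i)⟫ := by
      rw [hsm, hv, real_inner_smul_left, real_inner_smul_right]; ring
    have hlow2 : c * (ε / 2) ^ 2 ≤ (⟪v i, G 1 (v i)⟫ : ℝ) := by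
      rw [hin]
      have hsu : s i * ‖u i‖ = ε / 2 := by
        have h0 : ‖u i‖ ≠ 0 := (hupos i).ne'
        rw [hs]
        field_simp
      have h5 : s i ^ 2 * (c * ‖u i‖ ^ 2) = c * (ε/2) ^ 2 := by
        calc s i ^ 2 * (c * ‖u i‖ ^ 2) = c * (s i * ‖u i‖) ^ 2 := by ring
          _ = c * (ε/2) ^ 2 := by rw [hsu]
      calc c * (ε / 2) ^ 2 = s i ^ 2 * (c * ‖u i‖ ^ 2) := h5.symm
        _ ≤ s i ^ 2 * ⟪u i, G 1 (u i)⟫ := by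
            apply mul_le_mul_of_nonneg_left (hlow i) (sq_nonneg _)
    have hcs : (⟪v i, G 1 (v i)⟫ : ℝ) ≤ ‖v i‖ * ‖G 1 (v i)‖ := real_inner_le_norm _ _
    rw [hvnorm i] at hcs
    have hε2 : (0:ℝ) < ε / 2 := by linarith
    rw [hδdef]
    nlinarith [norm_nonneg (G 1 (v i))]
  -- pairwise orthogonality and separation
  have horth : ∀ i j, i ≠ j → (⟪G 1 (v i), G 1 (v j)⟫ : ℝ) = 0 := by
    intro i j hij
    have h1 : G 1 (v i) = s i • indMul (A i) (G 1 f) := by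
      rw [show G 1 (v i) = s i • G 1 (u i) from (G 1).map_smul _ _, hcomm i]
    have h2 : G 1 (v j) = s j • indMul (A j) (G 1 f) := by
      rw [show G 1 (v j) = s j • G 1 (u j) from (G 1).map_smul _ _, hcomm j]
    rw [h1, h2, real_inner_smul_left, real_inner_smul_right,
      inner_indMul_orth (hinv i).meas (hinv j).meas (hdisj i j hij), mul_zero, mul_zero]
  have hsep : ∀ i j, i ≠ j → δ ≤ ‖G 1 (v i) - G 1 (v j)‖ := by
    intro i j hij
    have hexp : ‖G 1 (v i) - G 1 (v j)‖ ^ 2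
        = ‖G 1 (v i)‖ ^ 2 - 2 * ⟪G 1 (v i), G 1 (v j)⟫ + ‖G 1 (v j)‖ ^ 2 := by
      rw [@norm_sub_sq_real]
    rw [horth i j hij] at hexp
    nlinarith [hGvnorm i, hGvnorm j, norm_nonneg (G 1 (v i) - G 1 (v j)), hδ]
  -- injection into the covering net
  have hmem : ∀ i, ∃ y ∈ htfin.toFinset, G 1 (v i) ∈ Metric.ball y (δ / 2) := by
    intro i
    have := htcov (hvK i)
    simp only [Set.mem_iUnion] at this
    obtain ⟨y, hy, hmem⟩ := this
    exact ⟨y, htfin.mem_toFinset.mpr hy, hmem⟩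
  choose φ hφmem hφball using hmem
  have hinj : Function.Injective φ := by
    intro i j hij
    by_contra hne
    have h1 := hφball i
    have h2 := hφball j
    rw [hij] at h1
    have hd : dist (G 1 (v i)) (G 1 (v j)) < δ := by
      calc dist (G 1 (v i)) (G 1 (v j))
          ≤ dist (G 1 (v i)) (φ j) + dist (G 1 (v j)) (φ j) := dist_triangle_right _ _ _
        _ < δ / 2 + δ / 2 := add_lt_add (Metric.mem_ball.mp h1) (Metric.mem_ball.mp h2)
        _ = δ := by ring
    have hs2 := hsep i j hne
    rw [← dist_eq_norm] at hs2
    linarith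
  have key := Fintype.card_le_of_injective
    (fun i => (⟨φ i, hφmem i⟩ : {y // y ∈ htfin.toFinset}))
    (fun i j h => hinj (congrArg Subtype.val h))
  simpa [Fintype.card_coe] using key

end Gerlach3
section Gerlach4
variable {μ : Measure X} {T : WideForm μ}

/-- An atom of the algebra of invariant sets. -/
def GAtom (T : WideForm μ) (A : Set X) : Prop :=
  FormInvariant T A ∧ 0 < μ A ∧
    ∀ B : Set X, MeasurableSet B → B ⊆ A → FormInvariant T B →
      μ B = 0 ∨ μ (A \ B) = 0

lemma gatom_iff_component {A : Set X} : GAtom T A ↔ IsComponent T A := by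
  constructor
  · rintro ⟨hinv, hpos, hatom⟩
    refine ⟨hinv, hpos, fun B hmB hBA hres => ?_⟩
    exact hatom B hmB hBA (restricted_invariant hinv hmB hBA hres)
  · rintro ⟨hinv, hpos, hcomp⟩
    refine ⟨hinv, hpos, fun B hmB hBA hBinv => ?_⟩
    exact hcomp B hmB hBA (fun g hg _ => hBinv.2 g hg)

lemma gatom_overlap {A B : Set X} (hA : GAtom T A) (hB : GAtom T B)
    (h : 0 < μ (A ∩ B)) : μ (A \ B) = 0 ∧ μ (B \ A) = 0 := by
  have hinv : FormInvariant T (A ∩ B) := invariant_inter hA.1 hB.1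
  have hne : μ (A ∩ B) ≠ 0 := h.ne'
  constructor
  · rcases hA.2.2 (A ∩ B) (hA.1.meas.inter hB.1.meas) Set.inter_subset_left hinv with
      h0 | h0
    · exact absurd h0 hne
    · rwa [Set.diff_self_inter] at h0
  · rcases hB.2.2 (A ∩ B) (hA.1.meas.inter hB.1.meas) Set.inter_subset_right hinv with
      h0 | h0
    · exact absurd h0 hne
    · rwa [Set.diff_inter_self_eq_diff] at h0

/-- If a family `F` covers `X` up to a null set, any set of positive measure meets
some member of `F` in positive measure. -/
lemma meets_cover {m : ℕ} (F : Fin m → Set X) (hcov : μ ((⋃ i, F i)ᶜ) = 0)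
    {E : Set X} (hE : 0 < μ E) : ∃ i, 0 < μ (E ∩ F i) := by
  by_contra h
  push_neg at h
  have h' : ∀ i, μ (E ∩ F i) = 0 := fun i => le_antisymm (by simpa using h i) zero_le
  have h1 : μ (E ∩ ⋃ i, F i) = 0 := by
    rw [Set.inter_iUnion]
    exact measure_iUnion_null h'
  have h2 : μ (E \ ⋃ i, F i) = 0 :=
    measure_mono_null (fun x hx => hx.2) hcov
  have := measure_le_inter_add_diff μ E (⋃ i, F i)
  rw [h1, h2, add_zero] at this
  exact absurd (le_antisymm this zero_le) hE.ne'

end Gerlach4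
/-- Gerlach's lemma: a positivity preserving form in the wide sense with
compact resolvent admitting `f > 0` a.e. with `G₁ f ≥ c f` decomposes the space into
finitely many `Q`-connected components, uniquely up to null sets. -/
theorem gerlach_decomposition {μ : Measure X} (T : WideForm μ) (hpp : T.PosPres)
    (G : ℝ → Lp ℝ 2 μ →L[ℝ] Lp ℝ 2 μ) (hG : T.IsResolvent G)
    (hcpt : ∀ α > 0, IsCompactOperator (G α))
    (f : Lp ℝ 2 μ) (hf : ∀ᵐ x ∂μ, 0 < (f : X → ℝ) x)
    (c : ℝ) (hc : 0 < c) (hGf : c • f ≤ G 1 f) :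
    ∃ (l : ℕ) (C : Fin l → Set X),
      (∀ i, IsComponent T (C i)) ∧
      (∀ i j, i ≠ j → μ (C i ∩ C j) = 0) ∧
      μ ((⋃ i, C i)ᶜ) = 0 ∧
      ∀ (l' : ℕ) (D : Fin l' → Set X),
        (∀ i, IsComponent T (D i)) → (∀ i j, i ≠ j → μ (D i ∩ D j) = 0) →
        μ ((⋃ i, D i)ᶜ) = 0 →
        ∃ e : Fin l' ≃ Fin l, ∀ i, μ (symmDiff (D i) (C (e i))) = 0 := by
  classical
  obtain ⟨N, hN⟩ := card_bound (T := T) hG (hcpt 1 one_pos) hf hc hGf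
  let P : ℕ → Prop := fun n => ∃ C : Fin n → Set X,
    (∀ i, FormInvariant T (C i)) ∧ (∀ i, 0 < μ (C i)) ∧
    (∀ i j, i ≠ j → μ (C i ∩ C j) = 0) ∧ μ ((⋃ i, C i)ᶜ) = 0
  have hbound : ∀ m, P m → m ≤ N := by
    rintro m ⟨C, h1, h2, h3, _⟩
    exact hN m C h1 h2 h3
  have hexists : ∃ m, P m := by
    by_cases hμ : μ Set.univ = 0
    · exact ⟨0, fun i => i.elim0, fun i => i.elim0, fun i => i.elim0,
        fun i j _ => i.elim0, by rw [Set.iUnion_of_empty, Set.compl_empty]; exact hμ⟩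
    · refine ⟨1, fun _ => Set.univ, fun _ => invariant_univ, fun _ => ?_, ?_, ?_⟩
      · exact pos_iff_ne_zero.mpr hμ
      · intro i j hij; exact absurd (Subsingleton.elim i j) hij
      · rw [Set.iUnion_const, Set.compl_univ]; exact measure_empty
  obtain ⟨m0, hm0⟩ := hexists
  set l := Nat.findGreatest P N with hl
  have hPl : P l := Nat.findGreatest_spec (hbound m0 hm0) hm0
  have hmax : ∀ m, P m → m ≤ l := fun m hm => Nat.le_findGreatest (hbound m hm) hm
  obtain ⟨C, hCinv, hCpos, hCdisj, hCcov⟩ := hPl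
  -- every member of a maximal full family is an atom
  have hCatom : ∀ i, GAtom T (C i) := by
    intro i
    refine ⟨hCinv i, hCpos i, fun B hmB hBA hBinv => ?_⟩
    by_contra hcon
    push_neg at hcon
    obtain ⟨hB0, hB1⟩ := hcon
    set D : Fin (l + 1) → Set X := Fin.snoc (Function.update C i B) (C i \ B) with hD
    have hDc : ∀ k : Fin l, D (Fin.castSucc k) = if k = i then B else C k := by
      intro k
      rw [hD, Fin.snoc_castSucc, Function.update_apply]
    have hDl : D (Fin.last l) = C i \ B := by rw [hD, Fin.snoc_last]
    have hDsub : ∀ k : Fin l, D (Fin.castSucc k) ⊆ C k := by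
      intro k; rw [hDc]; split
      · rename_i h; subst h; exact hBA
      · exact subset_rfl
    have hlast_cast : ∀ p : Fin l, μ (D (Fin.last l) ∩ D (Fin.castSucc p)) = 0 := by
      intro p
      rw [hDl, hDc]
      split
      · rename_i h; subst h; rw [Set.diff_inter_self]; exact measure_empty
      · rename_i h
        refine measure_mono_null (fun x hx => ?_) (hCdisj i p (fun hh => h hh.symm))
        exact ⟨hx.1.1, hx.2⟩
    have hPl1 : P (l + 1) := by
      refine ⟨D, ?_, ?_, ?_, ?_⟩
      · intro j
        induction j using Fin.lastCases with
        | last => rw [hDl]; exact invariant_diff (hCinv i) hBinv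
        | cast p =>
          rw [hDc]; split
          · exact hBinv
          · exact hCinv p
      · intro j
        induction j using Fin.lastCases with
        | last => rw [hDl]; exact pos_iff_ne_zero.mpr hB1
        | cast p =>
          rw [hDc]; split
          · exact pos_iff_ne_zero.mpr hB0
          · exact hCpos p
      · intro j k
        induction j using Fin.lastCases with
        | last =>
          induction k using Fin.lastCases with
          | last => intro h; exact absurd rfl h
          | cast q => intro _; exact hlast_cast q
        | cast p =>
          induction k using Fin.lastCases with
          | last => intro _; rw [Set.inter_comm]; exact hlast_cast p
          | cast q =>
            intro hpq
            have hpq' : p ≠ q := fun h => hpq (by rw [h])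
            refine measure_mono_null (fun x hx => ?_) (hCdisj p q hpq')
            exact ⟨hDsub p hx.1, hDsub q hx.2⟩
      · refine measure_mono_null (Set.compl_subset_compl.mpr ?_) hCcov
        intro x hx
        rw [Set.mem_iUnion] at hx ⊢
        obtain ⟨j, hj⟩ := hx
        by_cases hji : j = i
        · subst hji
          by_cases hxB : x ∈ B
          · exact ⟨Fin.castSucc j, by rw [hDc]; simp [hxB]⟩
          · exact ⟨Fin.last l, by rw [hDl]; exact ⟨hj, hxB⟩⟩
        · exact ⟨Fin.castSucc j, by rw [hDc]; simp [hji, hj]⟩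
    have := hmax (l + 1) hPl1
    omega
  refine ⟨l, C, fun i => gatom_iff_component.mp (hCatom i), hCdisj, hCcov, ?_⟩
  -- uniqueness
  intro l' D hDcomp hDdisj hDcov
  have hDatom : ∀ j, GAtom T (D j) := fun j => gatom_iff_component.mpr (hDcomp j)
  have hkey : ∀ j : Fin l', ∃ i : Fin l, μ (D j \ C i) = 0 ∧ μ (C i \ D j) = 0 := by
    intro j
    obtain ⟨i, hi⟩ := meets_cover C hCcov (hDatom j).2.1
    obtain ⟨h1, h2⟩ := gatom_overlap (hDatom j) (hCatom i) hi
    exact ⟨i, h1, h2⟩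
  choose e0 he1 he2 using hkey
  have hinj : Function.Injective e0 := by
    intro j j' hjj
    by_contra hne
    have hd := hDdisj j j' hne
    have h3 := he2 j'
    rw [← hjj] at h3
    have hsub : C (e0 j) ⊆ (D j ∩ D j') ∪ ((C (e0 j) \ D j) ∪ (C (e0 j) \ D j')) := by
      intro x hx
      by_cases h1 : x ∈ D j
      · by_cases h2 : x ∈ D j'
        · exact Or.inl ⟨h1, h2⟩
        · exact Or.inr (Or.inr ⟨hx, h2⟩)
      · exact Or.inr (Or.inl ⟨hx, h1⟩)
    have hz : μ (C (e0 j)) = 0 := measure_mono_null hsub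
      (measure_union_null hd (measure_union_null (he2 j) h3))
    exact absurd hz (hCpos (e0 j)).ne'
  have hsurj : Function.Surjective e0 := by
    intro i
    obtain ⟨j, hj⟩ := meets_cover D hDcov (hCpos i)
    obtain ⟨hc1, hc2⟩ := gatom_overlap (hCatom i) (hDatom j) hj
    refine ⟨j, ?_⟩
    by_contra hne
    have hcc := hCdisj (e0 j) i hne
    have hsub : C i ⊆ (C (e0 j) ∩ C i) ∪ ((C i \ D j) ∪ (D j \ C (e0 j))) := by
      intro x hx
      by_cases h1 : x ∈ D j
      · by_cases h2 : x ∈ C (e0 j)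
        · exact Or.inl ⟨h2, hx⟩
        · exact Or.inr (Or.inr ⟨h1, h2⟩)
      · exact Or.inr (Or.inl ⟨hx, h1⟩)
    have hz : μ (C i) = 0 := measure_mono_null hsub
      (measure_union_null hcc (measure_union_null hc1 (he1 j)))
    exact absurd hz (hCpos i).ne'
  refine ⟨Equiv.ofBijective e0 ⟨hinj, hsurj⟩, ?_⟩
  intro j
  show μ (symmDiff (D j) (C (e0 j))) = 0
  rw [Set.symmDiff_def]
  exact measure_union_null (he1 j) (he2 j)
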